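/- Let N and n be positive natural numbers and let Ψ be a real symmetric positive definite matrix indexed by Fin N × Fin n that is block tridiagonal. Then there exists a matrix L indexed by Fin N × Fin n such that: (i) L((i,a),(j,b)) = 0 whenever (i,a) is lexicographically smaller than (j,b) (L is lower triangular); (ii) every diagonal entry L((i,a),(i,a)) is strictly positive; (iii) L · Lᵀ = Ψ; and (iv) L((i,a),(j,b)) = 0 whenever j + 1 < i. In other words, the Cholesky factor of a block tridiagonal symmetric positive definite matrix is block lower bidiagonal: the factorization preserves the block tridiagonal structure without fill-in. -/

import Mathlib

open Matrix

section aux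

variable {ι : Type*} [LinearOrder ι] [WellFoundedLT ι] [LocallyFiniteOrderBot ι] [Fintype ι]
  {S : Matrix ι ι ℝ} (hS : S.PosDef)

theorem myLowerInv_diag_one (i : ι) : LDL.lowerInv hS i i = 1 := by
  letI := Sᵀ.toNormedAddCommGroup hS.transpose
  letI := Sᵀ.toInnerProductSpace hS.transpose.posSemidef
  have key : ∀ j : ι, j < i →
      ∀ v ∈ (ℝ ∙ (InnerProductSpace.gramSchmidt ℝ (⇑(Pi.basisFun ℝ ι)) j)), v i = 0 := by
    intro j hj v hv
    have h1 : (ℝ ∙ (InnerProductSpace.gramSchmidt ℝ (⇑(Pi.basisFun ℝ ι)) j)) ≤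
        Submodule.span ℝ ((⇑(Pi.basisFun ℝ ι)) '' Set.Iic j) := by
      rw [Submodule.span_singleton_le_iff_mem]
      exact InnerProductSpace.gramSchmidt_mem_span ℝ _ (le_refl j)
    have h2 : Submodule.span ℝ ((⇑(Pi.basisFun ℝ ι)) '' Set.Iic j) ≤
        LinearMap.ker (LinearMap.proj i : (ι → ℝ) →ₗ[ℝ] ℝ) := by
      rw [Submodule.span_le]
      rintro _ ⟨l, hl, rfl⟩
      have hli : l ≠ i := fun h => absurd hj (not_lt.mpr (h ▸ hl))
      simp [LinearMap.mem_ker, Pi.basisFun_apply, Pi.single_apply, hli]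
    exact h2 (h1 hv)
  have hL : LDL.lowerInv hS i i = InnerProductSpace.gramSchmidt ℝ (⇑(Pi.basisFun ℝ ι)) i i := rfl
  have hbas : (Pi.basisFun ℝ ι) i i = 1 := by
    simp [Pi.basisFun_apply, Pi.single_apply]
  have h := congrFun (InnerProductSpace.gramSchmidt_def' ℝ (⇑(Pi.basisFun ℝ ι)) i) i
  rw [Pi.add_apply, Finset.sum_apply] at h
  rw [Finset.sum_eq_zero (fun j hj => ?_),
    add_zero, hbas] at h
  · rw [hL, ← h]
  · refine key j (Finset.mem_Iio.mp hj) _ ?_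
    exact SetLike.coe_mem _

theorem myLowerInv_row_ne_zero (i : ι) : LDL.lowerInv hS i ≠ 0 := fun h => by
  have := myLowerInv_diag_one hS i
  rw [h] at this
  simpa using this

theorem myDiagEntries_pos (i : ι) : 0 < LDL.diagEntries hS i := by
  have hne : star (LDL.lowerInv hS i) ≠ 0 := by
    simpa using myLowerInv_row_ne_zero hS i
  have := hS.dotProduct_mulVec_pos hne
  simpa [LDL.diagEntries, EuclideanSpace.inner_toLp_toLp, dotProduct_comm] using this

theorem myLowerInv_blockTriangular :
    (LDL.lowerInv hS).BlockTriangular OrderDual.toDual := by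
  intro i j h
  exact LDL.lowerInv_triangular hS (by exact h)

theorem myLower_triangular {i j : ι} (h : i < j) : LDL.lower hS i j = 0 := by
  haveI := LDL.invertibleLowerInv hS
  have := Matrix.blockTriangular_inv_of_blockTriangular (myLowerInv_blockTriangular hS)
  exact this (by exact h)

theorem myLower_diag_one (i : ι) : LDL.lower hS i i = 1 := by
  haveI := LDL.invertibleLowerInv hS
  have h1 : LDL.lowerInv hS * LDL.lower hS = 1 := by
    rw [LDL.lower, Matrix.mul_inv_of_invertible]
  have h2 := congrFun (congrFun h1 i) i
  rw [Matrix.mul_apply] at h2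
  rw [Finset.sum_eq_single i (fun k _ hk => ?_) (by simp)] at h2
  · rw [myLowerInv_diag_one hS i, one_mul] at h2
    rw [h2]; simp
  · rcases lt_or_gt_of_ne hk with hlt | hgt
    · rw [myLower_triangular hS hlt, mul_zero]
    · rw [LDL.lowerInv_triangular hS hgt, zero_mul]

theorem myLower_mul_diag :
    LDL.lower hS * LDL.diag hS = S * (LDL.lowerInv hS)ᴴ := by
  haveI := LDL.invertibleLowerInv hS
  have h1 : (LDL.lower hS)ᴴ * (LDL.lowerInv hS)ᴴ = 1 := by
    rw [LDL.lower, conjTranspose_nonsing_inv, Matrix.inv_mul_of_invertible]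
  calc LDL.lower hS * LDL.diag hS
      = LDL.lower hS * LDL.diag hS * ((LDL.lower hS)ᴴ * (LDL.lowerInv hS)ᴴ) := by
        rw [h1, Matrix.mul_one]
    _ = (LDL.lower hS * LDL.diag hS * (LDL.lower hS)ᴴ) * (LDL.lowerInv hS)ᴴ := by
        simp only [Matrix.mul_assoc]
    _ = S * (LDL.lowerInv hS)ᴴ := by rw [LDL.lower_conj_diag]

theorem myLower_zero {i j : ι} (h : ∀ k, k ≤ j → S i k = 0) : LDL.lower hS i j = 0 := by
  have h1 := congrFun (congrFun (myLower_mul_diag hS) i) j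
  rw [LDL.diag, Matrix.mul_diagonal, Matrix.mul_apply] at h1
  rw [Finset.sum_eq_zero (fun k _ => ?_)] at h1
  · exact (mul_eq_zero.mp h1).resolve_right (ne_of_gt (myDiagEntries_pos hS j))
  · rcases le_or_gt k j with hk | hk
    · rw [h k hk, zero_mul]
    · rw [conjTranspose_apply, LDL.lowerInv_triangular hS hk]
      simp

include hS in
theorem my_cholesky :
    ∃ L : Matrix ι ι ℝ,
      (∀ i j : ι, i < j → L i j = 0) ∧ (∀ i : ι, 0 < L i i) ∧ L * Lᵀ = S ∧
      (∀ i j : ι, (∀ k, k ≤ j → S i k = 0) → L i j = 0) := by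
  refine ⟨LDL.lower hS * Matrix.diagonal (fun k => Real.sqrt (LDL.diagEntries hS k)),
    ?_, ?_, ?_, ?_⟩
  · intro i j hij
    rw [Matrix.mul_diagonal, myLower_triangular hS hij, zero_mul]
  · intro i
    rw [Matrix.mul_diagonal, myLower_diag_one hS i, one_mul]
    exact Real.sqrt_pos.mpr (myDiagEntries_pos hS i)
  · have hd : Matrix.diagonal (fun k => Real.sqrt (LDL.diagEntries hS k)) *
        (Matrix.diagonal (fun k => Real.sqrt (LDL.diagEntries hS k)))ᵀ = LDL.diag hS := by
      rw [Matrix.diagonal_transpose, Matrix.diagonal_mul_diagonal, LDL.diag]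
      exact congrArg Matrix.diagonal (funext fun k =>
        Real.mul_self_sqrt (le_of_lt (myDiagEntries_pos hS k)))
    have hT : (LDL.lower hS)ᵀ = (LDL.lower hS)ᴴ := by
      ext a b
      simp [Matrix.conjTranspose_apply]
    calc (LDL.lower hS * Matrix.diagonal (fun k => Real.sqrt (LDL.diagEntries hS k))) *
          (LDL.lower hS * Matrix.diagonal (fun k => Real.sqrt (LDL.diagEntries hS k)))ᵀ
        = LDL.lower hS * ((Matrix.diagonal (fun k => Real.sqrt (LDL.diagEntries hS k)) *
            (Matrix.diagonal (fun k => Real.sqrt (LDL.diagEntries hS k)))ᵀ) *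
            (LDL.lower hS)ᵀ) := by
          rw [Matrix.transpose_mul]; simp only [Matrix.mul_assoc]
      _ = LDL.lower hS * (LDL.diag hS * (LDL.lower hS)ᴴ) := by rw [hd, hT]
      _ = S := by rw [← Matrix.mul_assoc]; exact LDL.lower_conj_diag hS
  · intro i j h
    rw [Matrix.mul_diagonal, myLower_zero hS h, zero_mul]

end aux

theorem my_posdef_submatrix {k l : Type*} [Fintype k] [Fintype l]
    {M : Matrix k k ℝ} (hM : M.PosDef) (e : l ≃ k) : (M.submatrix e e).PosDef := by
  rw [posDef_iff_dotProduct_mulVec] at hM ⊢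
  refine ⟨hM.1.submatrix e, fun x hx => ?_⟩
  have hx' : (x ∘ e.symm) ≠ 0 := fun h => hx (funext fun p => by
    have := congrFun h (e p); simpa using this)
  have hpos := hM.2 hx'
  convert hpos using 1
  rw [Matrix.submatrix_mulVec_equiv]
  simp only [dotProduct]
  rw [← Equiv.sum_comp e (fun q => star (x ∘ ⇑e.symm) q * (M *ᵥ x ∘ ⇑e.symm) q)]
  simp

/-- The Cholesky factor of a block tridiagonal symmetric positive definite matrix is block
lower bidiagonal: if `Ψ` (indexed by `Fin N × Fin n`, block index first) is symmetric
positive definite and block tridiagonal, then there is a matrix `L` that is lower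
triangular for the lexicographic order, has strictly positive diagonal entries, satisfies
`L * Lᵀ = Ψ`, and whose block `(i, j)` vanishes whenever `j + 1 < i`: the factorization
preserves the block tridiagonal structure without fill-in. -/
theorem block_tridiagonal_cholesky_no_fill_in (N n : ℕ) (hN : 0 < N) (hn : 0 < n)
    (Ψ : Matrix (Fin N × Fin n) (Fin N × Fin n) ℝ) (hsym : Ψ.IsSymm) (hpd : Ψ.PosDef)
    (htri : ∀ (i j : Fin N) (a b : Fin n),
      ((i : ℕ) + 1 < (j : ℕ) ∨ (j : ℕ) + 1 < (i : ℕ)) → Ψ (i, a) (j, b) = 0) :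
    ∃ L : Matrix (Fin N × Fin n) (Fin N × Fin n) ℝ,
      (∀ (i j : Fin N) (a b : Fin n),
        ((i : ℕ) < (j : ℕ) ∨ (i = j ∧ (a : ℕ) < (b : ℕ))) → L (i, a) (j, b) = 0) ∧
      (∀ (i : Fin N) (a : Fin n), 0 < L (i, a) (i, a)) ∧
      L * Lᵀ = Ψ ∧
      (∀ (i j : Fin N) (a b : Fin n), (j : ℕ) + 1 < (i : ℕ) → L (i, a) (j, b) = 0) := by
  classical
  let e : Fin N × Fin n ≃ Fin (N * n) := finProdFinEquiv
  have he : ∀ p : Fin N × Fin n, (e p : ℕ) = (p.2 : ℕ) + n * (p.1 : ℕ) := fun p => rfl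
  let S : Matrix (Fin (N * n)) (Fin (N * n)) ℝ := Ψ.submatrix e.symm e.symm
  have hS : S.PosDef := my_posdef_submatrix hpd e.symm
  obtain ⟨L, hL1, hL2, hL3, hL4⟩ := @my_cholesky (Fin (N * n)) _ (inferInstance : WellFoundedLT (Fin (N * n))) _ _ S hS
  have hSapp : ∀ p q : Fin (N * n), S p q = Ψ (e.symm p) (e.symm q) := fun p q => rfl
  refine ⟨L.submatrix e e, ?_, ?_, ?_, ?_⟩
  · intro i j a b hij
    refine hL1 _ _ ?_
    rw [Fin.lt_iff_val_lt_val, he, he]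
    dsimp only
    rcases hij with hij | ⟨rfl, hab⟩
    · have h1 : (a : ℕ) + n * (i : ℕ) < n * ((i : ℕ) + 1) := by
        have := a.isLt
        rw [Nat.mul_succ]
        omega
      have h2 : n * ((i : ℕ) + 1) ≤ n * (j : ℕ) := Nat.mul_le_mul_left n (by omega)
      have h3 : n * (j : ℕ) ≤ (b : ℕ) + n * (j : ℕ) := Nat.le_add_left _ _
      omega
    · omega
  · intro i a
    exact hL2 _
  · have hT : (L.submatrix e e)ᵀ = Lᵀ.submatrix e e := Matrix.transpose_submatrix L e e
    rw [hT, Matrix.submatrix_mul_equiv, hL3]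
    show (Ψ.submatrix e.symm e.symm).submatrix e e = Ψ
    rw [Matrix.submatrix_submatrix, Equiv.symm_comp_self, Matrix.submatrix_id_id]
  · intro i j a b hij
    refine hL4 _ _ fun k hk => ?_
    rw [hSapp, Equiv.symm_apply_apply]
    obtain ⟨⟨j', b'⟩, rfl⟩ := e.surjective k
    rw [Equiv.symm_apply_apply]
    have hkv : ((e (j', b') : Fin (N * n)) : ℕ) = (b' : ℕ) + n * (j' : ℕ) := he _
    have hkle : (b' : ℕ) + n * (j' : ℕ) ≤ (b : ℕ) + n * (j : ℕ) := by
      have := hk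
      rw [Fin.le_iff_val_le_val, hkv, he] at this
      exact this
    have hj' : (j' : ℕ) ≤ (j : ℕ) := by
      by_contra hcon
      push_neg at hcon
      have h1 : n * ((j : ℕ) + 1) ≤ n * (j' : ℕ) := Nat.mul_le_mul_left n (by omega)
      have h2 := b.isLt
      have h3 := b'.isLt
      rw [Nat.mul_succ] at h1
      omega
    exact htri i j' a b' (Or.inr (by omega))
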